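/- The weak combinatorics of the arrangement 𝒜(31,3) is (31; t₂ = 54, t₃ = 42, t₄ = 21, t₅ = 6, t₆ = 1, t₈ = 3), and t_k = 0 for every other k ≥ 2; that is, the number of points of ℙ²(ℝ) at which exactly k of the 31 forms of 𝒜(31,3) vanish equals 54 for k = 2, 42 for k = 3, 21 for k = 4, 6 for k = 5, 1 for k = 6, 3 for k = 8, and 0 for all other k ≥ 2. -/

import Mathlib

open MvPolynomial

noncomputable section

/-- The polynomial ring `S = ℝ[x,y,z]`. -/
abbrev S : Type := MvPolynomial (Fin 3) ℝ

/-- `e = √3` as a constant polynomial. -/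
def e : S := C (Real.sqrt 3)
def x : S := X 0
def y : S := X 1
def z : S := X 2

/-- The linear form `ℓ` vanishes at the point of `ℙ²(ℝ)` represented by any
nonzero vector mapping to `P`. -/
def Vanish (ℓ : S) (P : Projectivization ℝ (Fin 3 → ℝ)) : Prop :=
  ∀ (v : Fin 3 → ℝ) (hv : v ≠ 0), Projectivization.mk ℝ v hv = P → eval v ℓ = 0

/-- `tk A k` is the number of points of `ℙ²(ℝ)` at which exactly `k` of the
forms of `A` vanish. -/
def tk (A : Finset S) (k : ℕ) : ℕ :=
  {P : Projectivization ℝ (Fin 3 → ℝ) |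
    {ℓ : S | ℓ ∈ A ∧ Vanish ℓ P}.ncard = k}.ncard

/-- The arrangement 𝒜(31,3). -/
def A313 : Finset S :=
  { (z),
    (y),
    (x),
    (e*x+y),
    (e*x-y),
    (x+e*y),
    (x-e*y),
    (2*x+e*z),
    (2*x-e*z),
    (x+e*z),
    (x-e*z),
    (x+e*y+e*z),
    (x+e*y-e*z),
    (x-e*y+e*z),
    (x-e*y-e*z),
    (x+e*y+2*e*z),
    (x+e*y-2*e*z),
    (x-e*y+2*e*z),
    (x-e*y-2*e*z),
    (e*x+y+z),
    (e*x+y-z),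
    (e*x-y+z),
    (e*x-y-z),
    (2*y+z),
    (2*y-z),
    (4*x+e*z),
    (4*x-e*z),
    (2*x-2*e*y+e*z),
    (2*x-2*e*y-e*z),
    (2*x+2*e*y-e*z),
    (2*x+2*e*y+e*z) }


-- ===================== auxiliary infrastructure =====================

open Matrix

noncomputable instance : DecidableEq (Projectivization ℝ (Fin 3 → ℝ)) := Classical.decEq _

abbrev R3 := Zsqrtd 3
abbrev V := R3 × R3 × R3

noncomputable def φ : Zsqrtd 3 →+* ℝ := Zsqrtd.toReal (by norm_num)

lemma φ_inj : Function.Injective φ := by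
  apply Zsqrtd.toReal_injective
  intro n h
  have h2 : n*n ≤ 1 ∨ 4 ≤ n*n := by
    rcases le_or_gt n (-2) with h'|h'
    · right; nlinarith
    rcases le_or_gt 2 n with h''|h''
    · right; nlinarith
    · left; nlinarith
  omega

lemma φ_apply (a : R3) : φ a = (a.re : ℝ) + a.im * Real.sqrt 3 := by
  simp [φ]

def dotR (c v : V) : R3 := c.1*v.1 + c.2.1*v.2.1 + c.2.2*v.2.2
def crR (u v : V) : V :=
  (u.2.1*v.2.2 - u.2.2*v.2.1, u.2.2*v.1 - u.1*v.2.2, u.1*v.2.1 - u.2.1*v.1)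
def vR (v : V) : Fin 3 → ℝ := ![φ v.1, φ v.2.1, φ v.2.2]

def mkL (c : V) : S := C (φ c.1) * x + C (φ c.2.1) * y + C (φ c.2.2) * z

lemma eval_mkL (c : V) (v : Fin 3 → ℝ) :
    eval v (mkL c) = φ c.1 * v 0 + φ c.2.1 * v 1 + φ c.2.2 * v 2 := by
  simp [mkL, x, y, z]

lemma vR_ne_zero {p : V} (hp : p ≠ 0) : vR p ≠ 0 := by
  intro h
  apply hp
  have h0 := congrFun h 0
  have h1 := congrFun h 1
  have h2 := congrFun h 2
  simp [vR] at h0 h1 h2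
  obtain ⟨a, b, c⟩ := p
  have e0 : φ a = φ 0 := by simpa using h0
  have e1 : φ b = φ 0 := by simpa using h1
  have e2 : φ c = φ 0 := by simpa using h2
  simp [Prod.ext_iff, φ_inj e0, φ_inj e1, φ_inj e2]

lemma vR_cross (u v : V) : vR (crR u v) = crossProduct (vR u) (vR v) := by
  funext i
  fin_cases i <;> simp [vR, crR, crossProduct, map_sub, _root_.map_mul]

lemma dot_compat (c p : V) : (vR c) ⬝ᵥ (vR p) = φ (dotR c p) := by
  simp [vR, dotR, dotProduct, Fin.sum_univ_three, map_add, _root_.map_mul]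

lemma eval_vR (c p : V) : eval (vR p) (mkL c) = φ (dotR c p) := by
  rw [eval_mkL, ← dot_compat]
  simp [vR, dotProduct, Fin.sum_univ_three]

lemma dotP (c : V) (w : Fin 3 → ℝ) : (vR c) ⬝ᵥ w = eval w (mkL c) := by
  rw [eval_mkL]
  simp [vR, dotProduct, Fin.sum_univ_three]

open Projectivization in
lemma vanish_iff (c : V) (v : Fin 3 → ℝ) (hv : v ≠ 0) :
    Vanish (mkL c) (Projectivization.mk ℝ v hv) ↔ eval v (mkL c) = 0 := by
  constructor
  · exact fun h => h v hv rfl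
  · intro h w hw hmk
    obtain ⟨a, ha⟩ := (mk_eq_mk_iff ℝ w v hw hv).mp hmk
    rw [← ha]
    rw [eval_mkL] at h ⊢
    simp only [Pi.smul_apply, Units.smul_def, smul_eq_mul]
    rw [show φ c.1 * ((a:ℝ) * v 0) + φ c.2.1 * ((a:ℝ) * v 1) + φ c.2.2 * ((a:ℝ) * v 2)
        = (a:ℝ) * (φ c.1 * v 0 + φ c.2.1 * v 1 + φ c.2.2 * v 2) by ring, h, mul_zero]

lemma mkL_inj : Function.Injective mkL := by
  intro c c' h
  have h0 := congrArg (eval ![(1:ℝ),0,0]) h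
  have h1 := congrArg (eval ![(0:ℝ),1,0]) h
  have h2 := congrArg (eval ![(0:ℝ),0,1]) h
  rw [eval_mkL, eval_mkL] at h0 h1 h2
  simp at h0 h1 h2
  obtain ⟨a, b, cc⟩ := c; obtain ⟨a', b', cc'⟩ := c'
  simp only [Prod.ext_iff]
  exact ⟨φ_inj h0, φ_inj h1, φ_inj h2⟩

lemma triple (u v w : Fin 3 → ℝ) (hu : u ⬝ᵥ w = 0) (hv : v ⬝ᵥ w = 0) :
    crossProduct w (crossProduct u v) = 0 := by
  simp only [dotProduct, Fin.sum_univ_three] at hu hv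
  funext i
  fin_cases i
  · show w 1 * _ - w 2 * _ = _
    simp only [crossProduct, Matrix.cons_val_zero, Matrix.cons_val_one, Matrix.head_cons,
      LinearMap.mk₂_apply, Matrix.cons_val_two, Matrix.tail_cons, Pi.zero_apply]
    linear_combination u 0 * hv - v 0 * hu
  · show w 2 * _ - w 0 * _ = _
    simp only [crossProduct, Matrix.cons_val_zero, Matrix.cons_val_one, Matrix.head_cons,
      LinearMap.mk₂_apply, Matrix.cons_val_two, Matrix.tail_cons, Pi.zero_apply]
    linear_combination u 1 * hv - v 1 * hu
  · show w 0 * _ - w 1 * _ = _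
    simp only [crossProduct, Matrix.cons_val_zero, Matrix.cons_val_one, Matrix.head_cons,
      LinearMap.mk₂_apply, Matrix.cons_val_two, Matrix.tail_cons, Pi.zero_apply]
    linear_combination u 2 * hv - v 2 * hu

open Projectivization in
lemma mk_eq_of_cross_zero {a b : Fin 3 → ℝ} (ha : a ≠ 0) (hb : b ≠ 0)
    (h : crossProduct a b = 0) :
    Projectivization.mk ℝ a ha = Projectivization.mk ℝ b hb := by
  have hli : ¬ LinearIndependent ℝ ![a, b] := by
    rw [← crossProduct_ne_zero_iff_linearIndependent]
    simpa using h
  rw [LinearIndependent.pair_iff' ha] at hli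
  push_neg at hli
  obtain ⟨s, hs⟩ := hli
  have hs0 : s ≠ 0 := by rintro rfl; simp at hs; exact hb hs.symm
  rw [mk_eq_mk_iff']
  exact ⟨s⁻¹, by rw [← hs, smul_smul, inv_mul_cancel₀ hs0, one_smul]⟩

-- ===================== the data =====================

def linesL : List V := [
  (⟨0, 0⟩, ⟨0, 0⟩, ⟨1, 0⟩),
  (⟨0, 0⟩, ⟨1, 0⟩, ⟨0, 0⟩),
  (⟨1, 0⟩, ⟨0, 0⟩, ⟨0, 0⟩),
  (⟨0, 1⟩, ⟨1, 0⟩, ⟨0, 0⟩),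
  (⟨0, 1⟩, ⟨-1, 0⟩, ⟨0, 0⟩),
  (⟨1, 0⟩, ⟨0, 1⟩, ⟨0, 0⟩),
  (⟨1, 0⟩, ⟨0, -1⟩, ⟨0, 0⟩),
  (⟨2, 0⟩, ⟨0, 0⟩, ⟨0, 1⟩),
  (⟨2, 0⟩, ⟨0, 0⟩, ⟨0, -1⟩),
  (⟨1, 0⟩, ⟨0, 0⟩, ⟨0, 1⟩),
  (⟨1, 0⟩, ⟨0, 0⟩, ⟨0, -1⟩),
  (⟨1, 0⟩, ⟨0, 1⟩, ⟨0, 1⟩),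
  (⟨1, 0⟩, ⟨0, 1⟩, ⟨0, -1⟩),
  (⟨1, 0⟩, ⟨0, -1⟩, ⟨0, 1⟩),
  (⟨1, 0⟩, ⟨0, -1⟩, ⟨0, -1⟩),
  (⟨1, 0⟩, ⟨0, 1⟩, ⟨0, 2⟩),
  (⟨1, 0⟩, ⟨0, 1⟩, ⟨0, -2⟩),
  (⟨1, 0⟩, ⟨0, -1⟩, ⟨0, 2⟩),
  (⟨1, 0⟩, ⟨0, -1⟩, ⟨0, -2⟩),
  (⟨0, 1⟩, ⟨1, 0⟩, ⟨1, 0⟩),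
  (⟨0, 1⟩, ⟨1, 0⟩, ⟨-1, 0⟩),
  (⟨0, 1⟩, ⟨-1, 0⟩, ⟨1, 0⟩),
  (⟨0, 1⟩, ⟨-1, 0⟩, ⟨-1, 0⟩),
  (⟨0, 0⟩, ⟨2, 0⟩, ⟨1, 0⟩),
  (⟨0, 0⟩, ⟨2, 0⟩, ⟨-1, 0⟩),
  (⟨4, 0⟩, ⟨0, 0⟩, ⟨0, 1⟩),
  (⟨4, 0⟩, ⟨0, 0⟩, ⟨0, -1⟩),
  (⟨2, 0⟩, ⟨0, -2⟩, ⟨0, 1⟩),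
  (⟨2, 0⟩, ⟨0, -2⟩, ⟨0, -1⟩),
  (⟨2, 0⟩, ⟨0, 2⟩, ⟨0, -1⟩),
  (⟨2, 0⟩, ⟨0, 2⟩, ⟨0, 1⟩)]

def pts0 : List V := [(⟨0, 0⟩, ⟨0, 0⟩, ⟨1, 0⟩),
  (⟨0, 0⟩, ⟨1, 0⟩, ⟨-2, 0⟩),
  (⟨0, 0⟩, ⟨1, 0⟩, ⟨-1, 0⟩),
  (⟨0, 0⟩, ⟨1, 0⟩, ⟨0, 0⟩),
  (⟨0, 0⟩, ⟨1, 0⟩, ⟨1, 0⟩),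
  (⟨0, 0⟩, ⟨1, 0⟩, ⟨2, 0⟩),
  (⟨0, 0⟩, ⟨2, 0⟩, ⟨-1, 0⟩),
  (⟨0, 0⟩, ⟨2, 0⟩, ⟨1, 0⟩),
  (⟨1, 0⟩, ⟨0, -1⟩, ⟨0, -2⟩),
  (⟨1, 0⟩, ⟨0, -1⟩, ⟨0, 0⟩),
  (⟨1, 0⟩, ⟨0, -1⟩, ⟨0, 2⟩),
  (⟨1, 0⟩, ⟨0, 0⟩, ⟨0, -1⟩),
  (⟨1, 0⟩, ⟨0, 0⟩, ⟨0, 0⟩),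
  (⟨1, 0⟩, ⟨0, 0⟩, ⟨0, 1⟩),
  (⟨1, 0⟩, ⟨0, 1⟩, ⟨0, -2⟩),
  (⟨1, 0⟩, ⟨0, 1⟩, ⟨0, 0⟩),
  (⟨1, 0⟩, ⟨0, 1⟩, ⟨0, 2⟩),
  (⟨3, 0⟩, ⟨0, -9⟩, ⟨0, -4⟩),
  (⟨3, 0⟩, ⟨0, -9⟩, ⟨0, 4⟩),
  (⟨3, 0⟩, ⟨0, -7⟩, ⟨0, -4⟩),
  (⟨3, 0⟩, ⟨0, -7⟩, ⟨0, 4⟩),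
  (⟨3, 0⟩, ⟨0, -5⟩, ⟨0, -8⟩),
  (⟨3, 0⟩, ⟨0, -5⟩, ⟨0, -4⟩),
  (⟨3, 0⟩, ⟨0, -5⟩, ⟨0, -2⟩),
  (⟨3, 0⟩, ⟨0, -5⟩, ⟨0, 2⟩),
  (⟨3, 0⟩, ⟨0, -5⟩, ⟨0, 4⟩)]
def pts1 : List V := [(⟨3, 0⟩, ⟨0, -5⟩, ⟨0, 8⟩),
  (⟨3, 0⟩, ⟨0, -4⟩, ⟨0, -1⟩),
  (⟨3, 0⟩, ⟨0, -4⟩, ⟨0, 1⟩),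
  (⟨3, 0⟩, ⟨0, -3⟩, ⟨0, -8⟩),
  (⟨3, 0⟩, ⟨0, -3⟩, ⟨0, -4⟩),
  (⟨3, 0⟩, ⟨0, -3⟩, ⟨0, -2⟩),
  (⟨3, 0⟩, ⟨0, -3⟩, ⟨0, -1⟩),
  (⟨3, 0⟩, ⟨0, -3⟩, ⟨0, 1⟩),
  (⟨3, 0⟩, ⟨0, -3⟩, ⟨0, 2⟩),
  (⟨3, 0⟩, ⟨0, -3⟩, ⟨0, 4⟩),
  (⟨3, 0⟩, ⟨0, -3⟩, ⟨0, 8⟩),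
  (⟨3, 0⟩, ⟨0, -2⟩, ⟨0, -4⟩),
  (⟨3, 0⟩, ⟨0, -2⟩, ⟨0, -2⟩),
  (⟨3, 0⟩, ⟨0, -2⟩, ⟨0, -1⟩),
  (⟨3, 0⟩, ⟨0, -2⟩, ⟨0, 1⟩),
  (⟨3, 0⟩, ⟨0, -2⟩, ⟨0, 2⟩),
  (⟨3, 0⟩, ⟨0, -2⟩, ⟨0, 4⟩),
  (⟨3, 0⟩, ⟨0, -1⟩, ⟨0, -4⟩),
  (⟨3, 0⟩, ⟨0, -1⟩, ⟨0, -2⟩),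
  (⟨3, 0⟩, ⟨0, -1⟩, ⟨0, -1⟩),
  (⟨3, 0⟩, ⟨0, -1⟩, ⟨0, 0⟩),
  (⟨3, 0⟩, ⟨0, -1⟩, ⟨0, 1⟩),
  (⟨3, 0⟩, ⟨0, -1⟩, ⟨0, 2⟩),
  (⟨3, 0⟩, ⟨0, -1⟩, ⟨0, 4⟩),
  (⟨3, 0⟩, ⟨0, 0⟩, ⟨0, -4⟩),
  (⟨3, 0⟩, ⟨0, 0⟩, ⟨0, -2⟩)]
def pts2 : List V := [(⟨3, 0⟩, ⟨0, 0⟩, ⟨0, -1⟩),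
  (⟨3, 0⟩, ⟨0, 0⟩, ⟨0, 1⟩),
  (⟨3, 0⟩, ⟨0, 0⟩, ⟨0, 2⟩),
  (⟨3, 0⟩, ⟨0, 0⟩, ⟨0, 4⟩),
  (⟨3, 0⟩, ⟨0, 1⟩, ⟨0, -4⟩),
  (⟨3, 0⟩, ⟨0, 1⟩, ⟨0, -2⟩),
  (⟨3, 0⟩, ⟨0, 1⟩, ⟨0, -1⟩),
  (⟨3, 0⟩, ⟨0, 1⟩, ⟨0, 0⟩),
  (⟨3, 0⟩, ⟨0, 1⟩, ⟨0, 1⟩),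
  (⟨3, 0⟩, ⟨0, 1⟩, ⟨0, 2⟩),
  (⟨3, 0⟩, ⟨0, 1⟩, ⟨0, 4⟩),
  (⟨3, 0⟩, ⟨0, 2⟩, ⟨0, -4⟩),
  (⟨3, 0⟩, ⟨0, 2⟩, ⟨0, -2⟩),
  (⟨3, 0⟩, ⟨0, 2⟩, ⟨0, -1⟩),
  (⟨3, 0⟩, ⟨0, 2⟩, ⟨0, 1⟩),
  (⟨3, 0⟩, ⟨0, 2⟩, ⟨0, 2⟩),
  (⟨3, 0⟩, ⟨0, 2⟩, ⟨0, 4⟩),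
  (⟨3, 0⟩, ⟨0, 3⟩, ⟨0, -8⟩),
  (⟨3, 0⟩, ⟨0, 3⟩, ⟨0, -4⟩),
  (⟨3, 0⟩, ⟨0, 3⟩, ⟨0, -2⟩),
  (⟨3, 0⟩, ⟨0, 3⟩, ⟨0, -1⟩),
  (⟨3, 0⟩, ⟨0, 3⟩, ⟨0, 1⟩),
  (⟨3, 0⟩, ⟨0, 3⟩, ⟨0, 2⟩),
  (⟨3, 0⟩, ⟨0, 3⟩, ⟨0, 4⟩),
  (⟨3, 0⟩, ⟨0, 3⟩, ⟨0, 8⟩),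
  (⟨3, 0⟩, ⟨0, 4⟩, ⟨0, -1⟩)]
def pts3 : List V := [(⟨3, 0⟩, ⟨0, 4⟩, ⟨0, 1⟩),
  (⟨3, 0⟩, ⟨0, 5⟩, ⟨0, -8⟩),
  (⟨3, 0⟩, ⟨0, 5⟩, ⟨0, -4⟩),
  (⟨3, 0⟩, ⟨0, 5⟩, ⟨0, -2⟩),
  (⟨3, 0⟩, ⟨0, 5⟩, ⟨0, 2⟩),
  (⟨3, 0⟩, ⟨0, 5⟩, ⟨0, 4⟩),
  (⟨3, 0⟩, ⟨0, 5⟩, ⟨0, 8⟩),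
  (⟨3, 0⟩, ⟨0, 7⟩, ⟨0, -4⟩),
  (⟨3, 0⟩, ⟨0, 7⟩, ⟨0, 4⟩),
  (⟨3, 0⟩, ⟨0, 9⟩, ⟨0, -4⟩),
  (⟨3, 0⟩, ⟨0, 9⟩, ⟨0, 4⟩),
  (⟨6, 0⟩, ⟨0, -3⟩, ⟨0, -2⟩),
  (⟨6, 0⟩, ⟨0, -3⟩, ⟨0, 2⟩),
  (⟨6, 0⟩, ⟨0, -1⟩, ⟨0, -2⟩),
  (⟨6, 0⟩, ⟨0, -1⟩, ⟨0, 2⟩),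
  (⟨6, 0⟩, ⟨0, 0⟩, ⟨0, -1⟩),
  (⟨6, 0⟩, ⟨0, 0⟩, ⟨0, 1⟩),
  (⟨6, 0⟩, ⟨0, 1⟩, ⟨0, -2⟩),
  (⟨6, 0⟩, ⟨0, 1⟩, ⟨0, 2⟩),
  (⟨6, 0⟩, ⟨0, 3⟩, ⟨0, -2⟩),
  (⟨6, 0⟩, ⟨0, 3⟩, ⟨0, 2⟩),
  (⟨9, 0⟩, ⟨0, -7⟩, ⟨0, -2⟩),
  (⟨9, 0⟩, ⟨0, -7⟩, ⟨0, 2⟩),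
  (⟨9, 0⟩, ⟨0, -5⟩, ⟨0, -4⟩),
  (⟨9, 0⟩, ⟨0, -5⟩, ⟨0, 4⟩),
  (⟨9, 0⟩, ⟨0, -1⟩, ⟨0, -8⟩)]
def pts4 : List V := [(⟨9, 0⟩, ⟨0, -1⟩, ⟨0, -4⟩),
  (⟨9, 0⟩, ⟨0, -1⟩, ⟨0, -2⟩),
  (⟨9, 0⟩, ⟨0, -1⟩, ⟨0, 2⟩),
  (⟨9, 0⟩, ⟨0, -1⟩, ⟨0, 4⟩),
  (⟨9, 0⟩, ⟨0, -1⟩, ⟨0, 8⟩),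
  (⟨9, 0⟩, ⟨0, 1⟩, ⟨0, -8⟩),
  (⟨9, 0⟩, ⟨0, 1⟩, ⟨0, -4⟩),
  (⟨9, 0⟩, ⟨0, 1⟩, ⟨0, -2⟩),
  (⟨9, 0⟩, ⟨0, 1⟩, ⟨0, 2⟩),
  (⟨9, 0⟩, ⟨0, 1⟩, ⟨0, 4⟩),
  (⟨9, 0⟩, ⟨0, 1⟩, ⟨0, 8⟩),
  (⟨9, 0⟩, ⟨0, 5⟩, ⟨0, -4⟩),
  (⟨9, 0⟩, ⟨0, 5⟩, ⟨0, 4⟩),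
  (⟨9, 0⟩, ⟨0, 7⟩, ⟨0, -2⟩),
  (⟨9, 0⟩, ⟨0, 7⟩, ⟨0, 2⟩),
  (⟨15, 0⟩, ⟨0, -3⟩, ⟨0, -4⟩),
  (⟨15, 0⟩, ⟨0, -3⟩, ⟨0, 4⟩),
  (⟨15, 0⟩, ⟨0, -1⟩, ⟨0, -2⟩),
  (⟨15, 0⟩, ⟨0, -1⟩, ⟨0, 2⟩),
  (⟨15, 0⟩, ⟨0, 1⟩, ⟨0, -2⟩),
  (⟨15, 0⟩, ⟨0, 1⟩, ⟨0, 2⟩),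
  (⟨15, 0⟩, ⟨0, 3⟩, ⟨0, -4⟩),
  (⟨15, 0⟩, ⟨0, 3⟩, ⟨0, 4⟩)]
def ptsL : List V := pts0 ++ pts1 ++ pts2 ++ pts3 ++ pts4

def nLines (p : V) : ℕ := (linesL.filter (fun c => dotR c p == 0)).length

set_option maxRecDepth 1000000
set_option maxHeartbeats 4000000

lemma map_eq : linesL.map mkL =
    [(z), (y), (x), (e*x+y), (e*x-y), (x+e*y), (x-e*y), (2*x+e*z), (2*x-e*z),
    (x+e*z), (x-e*z), (x+e*y+e*z), (x+e*y-e*z), (x-e*y+e*z), (x-e*y-e*z),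
    (x+e*y+2*e*z), (x+e*y-2*e*z), (x-e*y+2*e*z), (x-e*y-2*e*z),
    (e*x+y+z), (e*x+y-z), (e*x-y+z), (e*x-y-z), (2*y+z), (2*y-z),
    (4*x+e*z), (4*x-e*z), (2*x-2*e*y+e*z), (2*x-2*e*y-e*z), (2*x+2*e*y-e*z), (2*x+2*e*y+e*z)] := by
  simp only [linesL, List.map_cons, List.map_nil, List.cons.injEq, and_true]
  repeat' apply And.intro
  all_goals
    simp only [mkL, φ_apply, e]
    push_cast
    try norm_num
    try simp only [map_ofNat, C_mul, C_neg, MvPolynomial.C_0, MvPolynomial.C_1, _root_.map_one,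
      map_zero]
    try ring
    try tauto

set_option maxHeartbeats 2000000 in
lemma A313_eq : A313 = (linesL.map mkL).toFinset := by
  rw [map_eq]
  ext ℓ
  simp only [A313, Finset.mem_insert, Finset.mem_singleton, List.mem_toFinset, List.mem_cons,
    List.not_mem_nil, or_false]


lemma hND : linesL.Nodup := by decide
lemma hNDp : ptsL.Nodup := by decide
lemma hNZ : ∀ p ∈ ptsL, p ≠ 0 := by decide
lemma hD1 : ∀ c ∈ linesL, ∀ c' ∈ linesL, c ≠ c' → crR c c' ≠ 0 := by decide
lemma hD3 : ptsL.Pairwise (fun p q => crR p q ≠ 0) := by decide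
lemma hD4 : ∀ c ∈ linesL, ∀ c' ∈ linesL,
    crR c c' = 0 ∨ ∃ p ∈ ptsL, dotR c p = 0 ∧ dotR c' p = 0 := by decide
lemma hD5 : ∀ p ∈ ptsL, nLines p ∈ [2,3,4,5,6,8] := by decide
lemma hC2 : (ptsL.filter (fun p => nLines p == 2)).length = 54 := by decide
lemma hC3 : (ptsL.filter (fun p => nLines p == 3)).length = 42 := by decide
lemma hC4 : (ptsL.filter (fun p => nLines p == 4)).length = 21 := by decide
lemma hC5 : (ptsL.filter (fun p => nLines p == 5)).length = 6 := by decide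
lemma hC6 : (ptsL.filter (fun p => nLines p == 6)).length = 1 := by decide
lemma hC8 : (ptsL.filter (fun p => nLines p == 8)).length = 3 := by decide

lemma crR_anti (u v : V) : crR u v = -(crR v u) := by
  obtain ⟨a, b, c⟩ := u
  obtain ⟨d, e', f⟩ := v
  simp only [crR, Prod.neg_mk, Prod.mk.injEq]
  refine ⟨by ring, by ring, by ring⟩

lemma hSym : Symmetric (fun p q : V => crR p q ≠ 0) := by
  intro p q h h0
  exact h (by rw [crR_anti p q, h0, neg_zero])

lemma hD3' : ∀ p ∈ ptsL, ∀ q ∈ ptsL, p ≠ q → crR p q ≠ 0 :=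
  fun p hp q hq hne =>
    haveI : Std.Symm (fun p q : V => crR p q ≠ 0) := ⟨fun _ _ h => hSym h⟩
    hD3.forall hp hq hne

-- ===================== points of the projective plane =====================

noncomputable def mkP (p : V) : Projectivization ℝ (Fin 3 → ℝ) :=
  if h : vR p ≠ 0 then Projectivization.mk ℝ (vR p) h
  else Projectivization.mk ℝ ![1,0,0] (by
    intro hcon
    have := congrFun hcon 0
    norm_num at this)

lemma mkP_eq {p : V} (h : vR p ≠ 0) : mkP p = Projectivization.mk ℝ (vR p) h := dif_pos h

lemma crR_eq_zero_of_mkP_eq {p q : V} (hp : p ≠ 0) (hq : q ≠ 0) (h : mkP p = mkP q) :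
    crR p q = 0 := by
  rw [mkP_eq (vR_ne_zero hp), mkP_eq (vR_ne_zero hq),
    Projectivization.mk_eq_mk_iff'] at h
  obtain ⟨t, ht⟩ := h
  have hc : crossProduct (vR p) (vR q) = 0 := by
    rw [← ht, LinearMap.map_smul, LinearMap.smul_apply, cross_self, smul_zero]
  by_contra hne
  exact vR_ne_zero hne (by rw [vR_cross, hc])

lemma countA (p : V) (hp : p ≠ 0) :
    {ℓ : S | ℓ ∈ A313 ∧ Vanish ℓ (mkP p)}.ncard = nLines p := by
  have hv := vR_ne_zero hp
  have hset : {ℓ : S | ℓ ∈ A313 ∧ Vanish ℓ (mkP p)}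
      = ↑(((linesL.filter (fun c => dotR c p == 0)).map mkL).toFinset) := by
    ext ℓ
    simp only [Set.mem_setOf_eq, Finset.mem_coe, List.mem_toFinset, List.mem_map,
      List.mem_filter, beq_iff_eq]
    constructor
    · rintro ⟨hmem, hvan⟩
      rw [A313_eq, List.mem_toFinset] at hmem
      obtain ⟨c, hc, rfl⟩ := List.mem_map.mp hmem
      refine ⟨c, ⟨hc, ?_⟩, rfl⟩
      rw [mkP_eq hv] at hvan
      have h0 := (vanish_iff c (vR p) hv).mp hvan
      rw [eval_vR] at h0
      exact φ_inj (by simpa using h0)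
    · rintro ⟨c, ⟨hc, hdot⟩, rfl⟩
      constructor
      · rw [A313_eq, List.mem_toFinset]
        exact List.mem_map.mpr ⟨c, hc, rfl⟩
      · rw [mkP_eq hv]
        exact (vanish_iff c (vR p) hv).mpr (by rw [eval_vR, hdot, map_zero])
  rw [hset, Set.ncard_coe_finset,
    List.toFinset_card_of_nodup ((hND.filter _).map mkL_inj), List.length_map]
  rfl

lemma classify (k : ℕ) (hk : 2 ≤ k) :
    {P : Projectivization ℝ (Fin 3 → ℝ) | {ℓ : S | ℓ ∈ A313 ∧ Vanish ℓ P}.ncard = k}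
      = ↑(((ptsL.filter (fun p => nLines p == k)).map mkP).toFinset) := by
  ext P
  simp only [Set.mem_setOf_eq, Finset.mem_coe, List.mem_toFinset, List.mem_map,
    List.mem_filter, beq_iff_eq]
  constructor
  · intro hP
    have hfin : {ℓ : S | ℓ ∈ A313 ∧ Vanish ℓ P}.Finite :=
      A313.finite_toSet.subset (fun ℓ h => h.1)
    have h2 : 1 < {ℓ : S | ℓ ∈ A313 ∧ Vanish ℓ P}.ncard := by omega
    obtain ⟨ℓ, ℓ', hℓ, hℓ', hne⟩ := (Set.one_lt_ncard_iff hfin).mp h2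
    have hm := hℓ.1; rw [A313_eq, List.mem_toFinset] at hm
    obtain ⟨c, hc, hc2⟩ := List.mem_map.mp hm
    have hm' := hℓ'.1; rw [A313_eq, List.mem_toFinset] at hm'
    obtain ⟨c', hc', hc2'⟩ := List.mem_map.mp hm'
    subst hc2; subst hc2'
    have hcc : c ≠ c' := fun h => hne (congrArg mkL h)
    have hw := Projectivization.rep_nonzero P
    have hdot1 : (vR c) ⬝ᵥ P.rep = 0 := by
      rw [dotP]; exact hℓ.2 P.rep hw (Projectivization.mk_rep P)
    have hdot2 : (vR c') ⬝ᵥ P.rep = 0 := by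
      rw [dotP]; exact hℓ'.2 P.rep hw (Projectivization.mk_rep P)
    have hn : crR c c' ≠ 0 := hD1 c hc c' hc' hcc
    rcases hD4 c hc c' hc' with h0 | ⟨p, hpmem, hdp, hdp'⟩
    · exact absurd h0 hn
    have hp0 : p ≠ 0 := hNZ p hpmem
    have hvn : vR (crR c c') ≠ 0 := vR_ne_zero hn
    have e1 : Projectivization.mk ℝ P.rep hw = Projectivization.mk ℝ (vR (crR c c')) hvn :=
      mk_eq_of_cross_zero hw hvn (by rw [vR_cross]; exact triple _ _ _ hdot1 hdot2)
    have hdotp1 : (vR c) ⬝ᵥ (vR p) = 0 := by rw [dot_compat, hdp, map_zero]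
    have hdotp2 : (vR c') ⬝ᵥ (vR p) = 0 := by rw [dot_compat, hdp', map_zero]
    have e2 : Projectivization.mk ℝ (vR p) (vR_ne_zero hp0)
        = Projectivization.mk ℝ (vR (crR c c')) hvn :=
      mk_eq_of_cross_zero _ _ (by rw [vR_cross]; exact triple _ _ _ hdotp1 hdotp2)
    have hPp : P = mkP p := by
      rw [mkP_eq (vR_ne_zero hp0), ← Projectivization.mk_rep P, e1, e2]
    refine ⟨p, ⟨hpmem, ?_⟩, hPp.symm⟩
    rw [hPp] at hP
    exact (countA p hp0).symm.trans hP
  · rintro ⟨p, ⟨hpmem, hnl⟩, rfl⟩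
    rw [countA p (hNZ p hpmem)]
    exact hnl

lemma tk_eq (k : ℕ) (hk : 2 ≤ k) :
    tk A313 k = ((ptsL.filter (fun p => nLines p == k))).length := by
  have hnodup : (((ptsL.filter (fun p => nLines p == k)).map mkP)).Nodup := by
    refine List.Nodup.map_on ?_ (hNDp.filter _)
    intro p hp q hq h
    by_contra hne
    have hp' := List.mem_of_mem_filter hp
    have hq' := List.mem_of_mem_filter hq
    exact hD3' p hp' q hq' hne
      (crR_eq_zero_of_mkP_eq (hNZ p hp') (hNZ q hq') h)
  rw [tk, classify k hk, Set.ncard_coe_finset, List.toFinset_card_of_nodup hnodup,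
    List.length_map]

lemma cardA : A313.card = 31 := by
  rw [A313_eq, List.toFinset_card_of_nodup (hND.map mkL_inj)]
  rfl

theorem stmt_6 :
    A313.card = 31 ∧
    tk A313 2 = 54 ∧ tk A313 3 = 42 ∧ tk A313 4 = 21 ∧
    tk A313 5 = 6 ∧ tk A313 6 = 1 ∧ tk A313 8 = 3 ∧
    ∀ k : ℕ, 2 ≤ k → k ∉ ({2, 3, 4, 5, 6, 8} : Set ℕ) → tk A313 k = 0 := by
  refine ⟨cardA, ?_, ?_, ?_, ?_, ?_, ?_, ?_⟩
  · rw [tk_eq 2 (by norm_num)]; exact hC2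
  · rw [tk_eq 3 (by norm_num)]; exact hC3
  · rw [tk_eq 4 (by norm_num)]; exact hC4
  · rw [tk_eq 5 (by norm_num)]; exact hC5
  · rw [tk_eq 6 (by norm_num)]; exact hC6
  · rw [tk_eq 8 (by norm_num)]; exact hC8
  · intro k hk hks
    simp only [Set.mem_insert_iff, Set.mem_singleton_iff, not_or] at hks
    obtain ⟨n2, n3, n4, n5, n6, n8⟩ := hks
    rw [tk_eq k hk]
    have : ptsL.filter (fun p => nLines p == k) = [] := by
      rw [List.filter_eq_nil_iff]
      intro p hp hbeq
      have h5 := hD5 p hp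
      simp only [beq_iff_eq] at hbeq
      simp only [List.mem_cons, List.not_mem_nil, or_false] at h5
      rcases h5 with h|h|h|h|h|h <;> omega
    rw [this]
    rfl
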